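/- Let f : ℝ_+^k → int(ℝ_+^k) be a continuous concave mapping (positive concave mapping) with a fixed point x* ∈ int(ℝ_+^k). Then for any starting point x₁ ∈ ℝ_+^k, the sequence defined by x_{n+1} = f(x_n) converges geometrically to x*: there exist c ∈ [0,1) and γ > 0 such that ‖x_{n+1} − x*‖ ≤ γ c^n for all n ∈ ℕ, for any norm ‖·‖ on ℝ^k. -/

import Mathlib

open Filter Topology Set

noncomputable def Mratio {k : ℕ} (x y : Fin k → ℝ) : ℝ :=
  sInf {β : ℝ | 0 < β ∧ ∀ i, x i ≤ β * y i}

noncomputable def dT {k : ℕ} (x y : Fin k → ℝ) : ℝ :=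
  Real.log (max (Mratio x y) (Mratio y x))

def posOrth (k : ℕ) : Set (Fin k → ℝ) := {x | ∀ i, 0 < x i}

def nonnegOrth (k : ℕ) : Set (Fin k → ℝ) := {x | ∀ i, 0 ≤ x i}

/-- Proposition 5, main result: the fixed point iteration of a continuous
positive concave mapping with a fixed point converges geometrically for any start. -/
theorem stmt9 {k : ℕ} (f : (Fin k → ℝ) → (Fin k → ℝ))
    (hpos : ∀ x ∈ nonnegOrth k, f x ∈ posOrth k)
    (hcont : ContinuousOn f (nonnegOrth k))
    (hconc : ∀ x ∈ nonnegOrth k, ∀ y ∈ nonnegOrth k, ∀ t : ℝ, 0 < t → t < 1 →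
      t • f x + (1 - t) • f y ≤ f (t • x + (1 - t) • y))
    (xstar : Fin k → ℝ) (hxstar : xstar ∈ posOrth k) (hfix : f xstar = xstar)
    (x : ℕ → Fin k → ℝ) (hx0 : x 0 ∈ nonnegOrth k)
    (hiter : ∀ n, x (n + 1) = f (x n)) :
    ∃ c : ℝ, 0 ≤ c ∧ c < 1 ∧ ∃ γ : ℝ, 0 < γ ∧
      ∀ n : ℕ, ‖x n - xstar‖ ≤ γ * c ^ n := by
  rcases Nat.eq_zero_or_pos k with hk | hk
  · subst hk
    refine ⟨1/2, by norm_num, by norm_num, 1, one_pos, fun n => ?_⟩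
    have hz : x n - xstar = 0 := funext fun i => i.elim0
    rw [hz, norm_zero]
    positivity
  haveI : Nonempty (Fin k) := ⟨⟨0, hk⟩⟩
  have hzero : (0 : Fin k → ℝ) ∈ nonnegOrth k := fun i => le_refl 0
  have hxsn : xstar ∈ nonnegOrth k := fun i => (hxstar i).le
  have hmem : ∀ n, x n ∈ nonnegOrth k := by
    intro n
    induction n with
    | zero => exact hx0
    | succ n ih => rw [hiter]; exact fun i => (hpos _ ih i).le
  -- monotonicity of f on the nonnegative orthant
  have mono : ∀ y ∈ nonnegOrth k, ∀ z ∈ nonnegOrth k, (∀ i, y i ≤ z i) →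
      ∀ i, f y i ≤ f z i := by
    intro y hy z hz hyz i
    by_contra hcon
    push_neg at hcon
    have hfy : 0 < f y i := hpos y hy i
    have hfz : 0 < f z i := hpos z hz i
    set s : ℝ := (f z i / f y i + 1) / 2 with hs
    have hsgt : f z i / f y i < s := by
      rw [hs]
      have : f z i / f y i < 1 := (div_lt_one hfy).mpr hcon
      linarith
    have hs1 : s < 1 := by
      rw [hs]
      have : f z i / f y i < 1 := (div_lt_one hfy).mpr hcon
      linarith
    have hs0 : 0 < s := by
      rw [hs]
      have : 0 < f z i / f y i := div_pos hfz hfy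
      linarith
    set w : Fin k → ℝ := (1 - s)⁻¹ • (z - s • y) with hw
    have hwmem : w ∈ nonnegOrth k := by
      intro j
      have h1 : 0 ≤ z j - s * y j := by nlinarith [hy j, hyz j, hz j]
      have h2 : (0:ℝ) ≤ (1 - s)⁻¹ := inv_nonneg.mpr (by linarith)
      have : w j = (1 - s)⁻¹ * (z j - s * y j) := by
        simp [hw, smul_eq_mul]
      rw [this]
      exact mul_nonneg h2 h1
    have hdecomp : s • y + (1 - s) • w = z := by
      funext j
      have hne : (1:ℝ) - s ≠ 0 := by linarith
      simp only [hw, Pi.add_apply, Pi.smul_apply, Pi.sub_apply, smul_eq_mul]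
      field_simp
      ring
    have hcc := hconc y hy w hwmem s hs0 hs1
    rw [hdecomp] at hcc
    have h2 := hcc i
    simp only [Pi.add_apply, Pi.smul_apply, smul_eq_mul] at h2
    have hfw : 0 < f w i := hpos w hwmem i
    have hsfy : f z i < s * f y i := (div_lt_iff₀ hfy).mp hsgt
    nlinarith [mul_pos (by linarith : (0:ℝ) < 1 - s) hfw]
  -- subhomogeneity
  have sublem : ∀ y ∈ nonnegOrth k, ∀ t : ℝ, 0 < t → t < 1 →
      ∀ i, t * f y i + (1 - t) * f 0 i ≤ f (t • y) i := by
    intro y hy t ht0 ht1 i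
    have hcc := hconc y hy 0 hzero t ht0 ht1
    have heq : t • y + (1 - t) • (0 : Fin k → ℝ) = t • y := by
      simp
    rw [heq] at hcc
    have := hcc i
    simpa [smul_eq_mul] using this
  -- δ with δ • xstar ≤ f 0
  obtain ⟨δ, hδ0, hδ1, hδle⟩ : ∃ δ : ℝ, 0 < δ ∧ δ ≤ 1 ∧ ∀ i, δ * xstar i ≤ f 0 i := by
    refine ⟨min 1 (Finset.univ.inf' Finset.univ_nonempty fun i => f 0 i / xstar i),
      ?_, min_le_left _ _, ?_⟩
    · refine lt_min one_pos ?_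
      rw [Finset.lt_inf'_iff]
      intro i _
      exact div_pos (hpos 0 hzero i) (hxstar i)
    · intro i
      have h1 : min 1 (Finset.univ.inf' Finset.univ_nonempty fun i => f 0 i / xstar i)
          ≤ f 0 i / xstar i :=
        le_trans (min_le_right _ _) (Finset.inf'_le _ (Finset.mem_univ i))
      exact (le_div_iff₀ (hxstar i)).mp h1
  -- α₁, β₁ bracketing x 1
  have hx1pos : ∀ i, 0 < x 1 i := by
    rw [hiter]; exact hpos _ hx0
  obtain ⟨α₁, hα₁0, hα₁1, hα₁le⟩ : ∃ a : ℝ, 0 < a ∧ a ≤ 1 ∧ ∀ i, a * xstar i ≤ x 1 i := by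
    refine ⟨min 1 (Finset.univ.inf' Finset.univ_nonempty fun i => x 1 i / xstar i),
      ?_, min_le_left _ _, ?_⟩
    · refine lt_min one_pos ?_
      rw [Finset.lt_inf'_iff]
      intro i _
      exact div_pos (hx1pos i) (hxstar i)
    · intro i
      have h1 : min 1 (Finset.univ.inf' Finset.univ_nonempty fun i => x 1 i / xstar i)
          ≤ x 1 i / xstar i :=
        le_trans (min_le_right _ _) (Finset.inf'_le _ (Finset.mem_univ i))
      exact (le_div_iff₀ (hxstar i)).mp h1
  obtain ⟨β₁, hβ₁1, hβ₁le⟩ : ∃ b : ℝ, 1 ≤ b ∧ ∀ i, x 1 i ≤ b * xstar i := by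
    refine ⟨max 1 (Finset.univ.sup' Finset.univ_nonempty fun i => x 1 i / xstar i),
      le_max_left _ _, ?_⟩
    intro i
    have h1 : x 1 i / xstar i ≤
        max 1 (Finset.univ.sup' Finset.univ_nonempty fun i => x 1 i / xstar i) :=
      le_trans (Finset.le_sup' (fun i => x 1 i / xstar i) (Finset.mem_univ i)) (le_max_right _ _)
    exact (div_le_iff₀ (hxstar i)).mp h1
  -- key scaling bounds at multiples of xstar
  have keylow : ∀ a : ℝ, 0 < a → a ≤ 1 →
      ∀ i, (a + (1 - a) * δ) * xstar i ≤ f (a • xstar) i := by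
    intro a ha0 ha1 i
    rcases eq_or_lt_of_le ha1 with h1 | h1
    · subst h1
      simp [one_smul, hfix]
    · have h := sublem xstar hxsn a ha0 h1 i
      rw [hfix] at h
      have h2 : (1 - a) * (δ * xstar i) ≤ (1 - a) * f 0 i :=
        mul_le_mul_of_nonneg_left (hδle i) (by linarith)
      nlinarith
  have keyhigh : ∀ b : ℝ, 1 ≤ b →
      ∀ i, f (b • xstar) i ≤ (1 + (b - 1) * (1 - δ)) * xstar i := by
    intro b hb1 i
    rcases eq_or_lt_of_le hb1 with h1 | h1
    · subst h1
      simp [one_smul, hfix]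
    · have hb0 : (0:ℝ) < b := by linarith
      have hbn : b • xstar ∈ nonnegOrth k := fun j => by
        have := hxstar j
        simp only [Pi.smul_apply, smul_eq_mul]
        positivity
      have ht0 : 0 < b⁻¹ := by positivity
      have ht1 : b⁻¹ < 1 := by
        rw [inv_lt_one_iff₀]; right; exact h1
      have hcc := hconc (b • xstar) hbn 0 hzero b⁻¹ ht0 ht1
      have heq : b⁻¹ • (b • xstar) + (1 - b⁻¹) • (0 : Fin k → ℝ) = xstar := by
        rw [smul_smul, inv_mul_cancel₀ (ne_of_gt hb0)]
        simp
      rw [heq, hfix] at hcc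
      have h2 := hcc i
      simp only [Pi.add_apply, Pi.smul_apply, smul_eq_mul] at h2
      have h3 : δ * xstar i ≤ f 0 i := hδle i
      have h5 := mul_le_mul_of_nonneg_left h2 hb0.le
      have h6 : b * (b⁻¹ * f (b • xstar) i + (1 - b⁻¹) * f 0 i)
          = f (b • xstar) i + (b - 1) * f 0 i := by
        field_simp
      rw [h6] at h5
      have h7 : (b - 1) * (δ * xstar i) ≤ (b - 1) * f 0 i :=
        mul_le_mul_of_nonneg_left h3 (by linarith)
      nlinarith
  -- rate
  set c : ℝ := max (1 - δ) (1/2) with hc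
  have hc0 : (0:ℝ) < c := lt_of_lt_of_le (by norm_num) (le_max_right _ _)
  have hc1 : c < 1 := max_lt (by linarith) (by norm_num)
  have hcd : 1 - δ ≤ c := le_max_left _ _
  -- main induction
  have key : ∀ n : ℕ, ∀ i,
      (1 - (1 - α₁) * c ^ n) * xstar i ≤ x (n + 1) i ∧
      x (n + 1) i ≤ (1 + (β₁ - 1) * c ^ n) * xstar i := by
    intro n
    induction n with
    | zero =>
      intro i
      simp only [pow_zero, mul_one]
      constructor
      · have := hα₁le i
        nlinarith
      · have := hβ₁le i
        nlinarith
    | succ n ih =>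
      intro i
      have hcpow : (0:ℝ) < c ^ n := pow_pos hc0 n
      have hcple : c ^ n ≤ 1 := pow_le_one₀ hc0.le hc1.le
      set a : ℝ := 1 - (1 - α₁) * c ^ n with haeq
      set b : ℝ := 1 + (β₁ - 1) * c ^ n with hbeq
      have ha0 : 0 < a := by
        have : (1 - α₁) * c ^ n ≤ (1 - α₁) * 1 :=
          mul_le_mul_of_nonneg_left hcple (by linarith)
        simp only [haeq]; nlinarith
      have ha1 : a ≤ 1 := by
        have : 0 ≤ (1 - α₁) * c ^ n := mul_nonneg (by linarith) hcpow.le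
        simp only [haeq]; linarith
      have hb1 : 1 ≤ b := by
        have : 0 ≤ (β₁ - 1) * c ^ n := mul_nonneg (by linarith) hcpow.le
        simp only [hbeq]; linarith
      have han : a • xstar ∈ nonnegOrth k := fun j => by
        have := hxstar j
        simp only [Pi.smul_apply, smul_eq_mul]
        positivity
      have hbn : b • xstar ∈ nonnegOrth k := fun j => by
        have := hxstar j
        simp only [Pi.smul_apply, smul_eq_mul]
        nlinarith
      -- lower bound
      have hlow : ∀ j, a • xstar j ≤ x (n + 1) j := fun j => by
        simpa [smul_eq_mul] using (ih j).1
      have hhigh : ∀ j, x (n + 1) j ≤ b • xstar j := fun j => by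
        simpa [smul_eq_mul] using (ih j).2
      have hm1 : f (a • xstar) i ≤ f (x (n + 1)) i :=
        mono (a • xstar) han (x (n + 1)) (hmem (n + 1)) hlow i
      have hm2 : f (x (n + 1)) i ≤ f (b • xstar) i :=
        mono (x (n + 1)) (hmem (n + 1)) (b • xstar) hbn hhigh i
      have hk1 := keylow a ha0 ha1 i
      have hk2 := keyhigh b hb1 i
      rw [hiter (n + 1)]
      constructor
      · refine le_trans ?_ (le_trans hk1 hm1)
        have hstep : 1 - (1 - α₁) * c ^ (n + 1) ≤ a + (1 - a) * δ := by
          have h1 : (1 - a) * (1 - δ) ≤ (1 - α₁) * c ^ n * c := by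
            have : 1 - a = (1 - α₁) * c ^ n := by simp [haeq]
            rw [this]
            exact mul_le_mul_of_nonneg_left hcd (mul_nonneg (by linarith) hcpow.le)
          have : c ^ (n + 1) = c ^ n * c := pow_succ c n
          nlinarith
        exact mul_le_mul_of_nonneg_right hstep (hxstar i).le
      · refine le_trans (le_trans hm2 hk2) ?_
        have hstep : 1 + (b - 1) * (1 - δ) ≤ 1 + (β₁ - 1) * c ^ (n + 1) := by
          have h1 : (b - 1) * (1 - δ) ≤ (β₁ - 1) * c ^ n * c := by
            have : b - 1 = (β₁ - 1) * c ^ n := by simp [hbeq]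
            rw [this]
            exact mul_le_mul_of_nonneg_left hcd (mul_nonneg (by linarith) hcpow.le)
          have : c ^ (n + 1) = c ^ n * c := pow_succ c n
          nlinarith
        exact mul_le_mul_of_nonneg_right hstep (hxstar i).le
  -- conclude
  set M : ℝ := max (1 - α₁) (β₁ - 1) with hM
  have hM0 : 0 ≤ M := le_trans (by linarith : (0:ℝ) ≤ 1 - α₁) (le_max_left _ _)
  set γ : ℝ := max (‖x 0 - xstar‖ + 1) (M * ‖xstar‖ / c) with hγ
  have hγ0 : 0 < γ := lt_of_lt_of_le (by positivity) (le_max_left _ _)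
  refine ⟨c, hc0.le, hc1, γ, hγ0, fun n => ?_⟩
  cases n with
  | zero =>
    simp only [pow_zero, mul_one]
    exact le_trans (by linarith) (le_max_left _ _)
  | succ n =>
    have hcp : (0:ℝ) < c ^ (n + 1) := pow_pos hc0 _
    have hrhs : 0 ≤ γ * c ^ (n + 1) := mul_nonneg hγ0.le hcp.le
    rw [pi_norm_le_iff_of_nonneg hrhs]
    intro i
    have hki := key n i
    have hxsi : 0 < xstar i := hxstar i
    have hxsnorm : xstar i ≤ ‖xstar‖ := le_trans (le_abs_self _) (norm_le_pi_norm xstar i)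
    have hcpow : (0:ℝ) ≤ c ^ n := (pow_pos hc0 n).le
    have hcx : (0:ℝ) ≤ c ^ n * xstar i := mul_nonneg hcpow hxsi.le
    have e1 : (1 - α₁) * (c ^ n * xstar i) ≤ M * (c ^ n * xstar i) :=
      mul_le_mul_of_nonneg_right (le_max_left _ _) hcx
    have e2 : (β₁ - 1) * (c ^ n * xstar i) ≤ M * (c ^ n * xstar i) :=
      mul_le_mul_of_nonneg_right (le_max_right _ _) hcx
    have l1 : (1 - (1 - α₁) * c ^ n) * xstar i
        = xstar i - (1 - α₁) * (c ^ n * xstar i) := by ring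
    have l2 : (1 + (β₁ - 1) * c ^ n) * xstar i
        = xstar i + (β₁ - 1) * (c ^ n * xstar i) := by ring
    have habs : |x (n + 1) i - xstar i| ≤ M * (c ^ n * xstar i) := by
      rw [abs_le]
      have hh1 := hki.1
      have hh2 := hki.2
      rw [l1] at hh1
      rw [l2] at hh2
      constructor <;> linarith
    have h2 : M * (c ^ n * xstar i) ≤ (M * ‖xstar‖) * c ^ n := by
      have : M * xstar i ≤ M * ‖xstar‖ := mul_le_mul_of_nonneg_left hxsnorm hM0
      calc M * (c ^ n * xstar i) = (M * xstar i) * c ^ n := by ring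
        _ ≤ (M * ‖xstar‖) * c ^ n := mul_le_mul_of_nonneg_right this hcpow
    have h3 : (M * ‖xstar‖) * c ^ n = (M * ‖xstar‖ / c) * c ^ (n + 1) := by
      rw [pow_succ]
      field_simp
    have h4 : (M * ‖xstar‖ / c) * c ^ (n + 1) ≤ γ * c ^ (n + 1) :=
      mul_le_mul_of_nonneg_right (le_max_right _ _) hcp.le
    calc ‖(x (n + 1) - xstar) i‖ = |x (n + 1) i - xstar i| := by
          simp [Real.norm_eq_abs]
      _ ≤ M * (c ^ n * xstar i) := habs
      _ ≤ (M * ‖xstar‖) * c ^ n := h2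
      _ = (M * ‖xstar‖ / c) * c ^ (n + 1) := h3
      _ ≤ γ * c ^ (n + 1) := h4
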